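/- arXiv:1804.04941 — 2 statements merged into one kernel-verified Lean document; each statement's English description precedes it below -/
import Mathlib

section
/- Let h : ℝ^n → ℝ^n be continuously differentiable and suppose the symmetrized Jacobian H(y) = (1/2)(Dh(y) + Dh(y)^T) is negative semidefinite for all y. If h(x*) = 0, then for all x, (x - x*)^T h(x) ≤ 0. -/
/-- dot product with a fixed vector as a continuous linear map -/
noncomputable def dotCLM (n : ℕ) (z : Fin n → ℝ) : (Fin n → ℝ) →L[ℝ] ℝ :=
  LinearMap.toContinuousLinearMap
    { toFun := fun w => dotProduct z w
      map_add' := fun a b => dotProduct_add z a b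
      map_smul' := fun c a => dotProduct_smul c z a }

lemma sym_quad (n : ℕ) (M : Matrix (Fin n) (Fin n) ℝ) (z : Fin n → ℝ) :
    dotProduct z (M.mulVec z)
      = dotProduct z ((((1:ℝ)/2) • (M + M.transpose)).mulVec z) := by
  have hT : dotProduct z (M.transpose.mulVec z)
      = dotProduct z (M.mulVec z) := by
    rw [Matrix.mulVec_transpose, dotProduct_comm, ← Matrix.dotProduct_mulVec]
  rw [Matrix.smul_mulVec, Matrix.add_mulVec, dotProduct_smul,
    dotProduct_add, hT, smul_eq_mul]
  ring

/-- If `h : ℝⁿ → ℝⁿ` is differentiable with Jacobian `J(y)` whose symmetrization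
`(1/2)(J(y) + J(y)ᵀ)` is negative semidefinite everywhere, and `h(x*) = 0`, then
`(x - x*)ᵀ h(x) ≤ 0` for all `x`. -/
theorem stmt_8 (n : ℕ) (h : (Fin n → ℝ) → (Fin n → ℝ))
    (J : (Fin n → ℝ) → Matrix (Fin n) (Fin n) ℝ)
    (hJcont : Continuous J)
    (hdiff : ∀ y : Fin n → ℝ,
      HasFDerivAt h (LinearMap.toContinuousLinearMap (J y).mulVecLin) y)
    (hnsd : ∀ (y x : Fin n → ℝ),
      dotProduct x ((((1:ℝ)/2) • (J y + (J y).transpose)).mulVec x) ≤ 0)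
    (xstar : Fin n → ℝ) (hx : h xstar = 0) :
    ∀ x : Fin n → ℝ, dotProduct (x - xstar) (h x) ≤ 0 := by
  intro x
  set z : Fin n → ℝ := x - xstar with hz
  set p : ℝ → (Fin n → ℝ) := fun s => xstar + s • z with hp
  set φ : ℝ → ℝ := fun s => dotProduct z (h (p s)) with hφ
  have hpderiv : ∀ s : ℝ, HasDerivAt p z s := by
    intro s
    simpa [hp] using ((hasDerivAt_id s).smul_const z).const_add xstar
  have hφderiv : ∀ s : ℝ,
      HasDerivAt φ (dotProduct z ((J (p s)).mulVec z)) s := by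
    intro s
    have h1 : HasDerivAt (fun s => h (p s)) ((J (p s)).mulVec z) s := by
      have h1' := (hdiff (p s)).comp_hasDerivAt s (hpderiv s)
      simp at h1'
      exact h1'
    have h2 := (dotCLM n z).hasFDerivAt.comp_hasDerivAt s h1
    simp [dotCLM, Function.comp_def] at h2
    exact h2
  have hderivle : ∀ s : ℝ, deriv φ s ≤ 0 := by
    intro s
    rw [(hφderiv s).deriv, sym_quad]
    exact hnsd (p s) z
  have hanti : Antitone φ :=
    antitone_of_deriv_nonpos (fun s => (hφderiv s).differentiableAt) hderivle
  have h10 : φ 1 ≤ φ 0 := hanti (by norm_num)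
  have hφ0 : φ 0 = 0 := by simp [φ, p, hx]
  have hφ1 : φ 1 = dotProduct z (h x) := by
    have : p 1 = x := by simp [p, z]
    simp only [hφ, this]
  rw [← hφ1]
  linarith [h10, hφ0.le, hφ0.ge]
end

section
/- At any equilibrium of the closed-loop system (17), i.e., any point where the right-hand sides of all equations vanish: (i) η̃* = 0; (ii) ζ̃* = 0; (iii) α̃* = 0 (provided the regressor vector Λ(ζ*) together with the equation Λ^T(ζ*) α̃* - γ ζ̃*_m = 0 and Λ(ζ*) ζ̃*_m = 0 imply both quantities vanish); hence the estimated disturbance equals the true disturbance: Ã(α̂*) ζ* = Ã(α) φ. -/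
/-- At any equilibrium of the closed-loop error system (17) (for one node, with
internal model of dimension `m = 2s+1`): (i) `η̃* = 0`; (ii) `ζ̃* = 0`;
(iii) `α̃* = 0` (under the stated proviso on the regressor `Λ(ζ*)`); hence the
estimated disturbance equals the true one: `Ã(α̂*) ζ* = Ã(α) φ`. -/
theorem stmt_13 (s : ℕ) (hs : 1 ≤ s)
    (α αhat : Fin s → ℝ)
    (Amat : (Fin s → ℝ) → Matrix (Fin (2 * s + 1)) (Fin (2 * s + 1)) ℝ)
    (hAmat : ∀ (b : Fin s → ℝ) (i j : Fin (2 * s + 1)),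
      Amat b i j =
        if (i : ℕ) < 2 * s then (if (j : ℕ) = (i : ℕ) + 1 then 1 else 0)
        else if h : (j : ℕ) % 2 = 1 then b ⟨(j : ℕ) / 2, by omega⟩ else 0)
    (r : Fin (2 * s + 1) → ℝ) (hrlast : r ⟨2 * s, by omega⟩ = 1)
    (p : Polynomial ℂ)
    (hp : p = Polynomial.X ^ (2 * s) +
      ∑ j : Fin (2 * s), Polynomial.C ((r j.castSucc : ℂ)) * Polynomial.X ^ (j : ℕ))
    (hHurwitz : ∀ z ∈ p.roots, z.re < 0)
    (γ kα : ℝ) (hγ : 0 < γ) (hkα : 0 < kα)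
    (G : Fin (2 * s + 1) → ℝ)
    (hG : ∀ i : Fin (2 * s + 1),
      G i = if (i : ℕ) = 2 * s - 1 then 1 else if (i : ℕ) = 2 * s then γ else 0)
    (ζ φv ζt : Fin (2 * s + 1) → ℝ) (hζt : ζt = ζ - φv)
    (Λ : Fin s → ℝ)
    (hΛ : ∀ k : Fin s, Λ k = ζ ⟨2 * (k : ℕ) + 1, by omega⟩)
    -- proviso: the regressor equations force both quantities to vanish
    (hPE : ∀ (b : Fin s → ℝ) (c : ℝ),
      ((∑ k, Λ k * b k) - γ * c = 0) → (∀ k, Λ k * c = 0) → b = 0 ∧ c = 0)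
    (ηt Pbar ρ flow μβ dD ω : ℝ)
    -- frequency equation at equilibrium
    (heq2 : Pbar + ρ + flow - μβ - dD * ω = 0)
    -- η̃ equation at equilibrium
    (heq4 : -ηt + Pbar + ρ + flow - μβ - dD * ω = 0)
    -- ζ̃ equation at equilibrium
    (heq5 : ∀ i : Fin (2 * s + 1),
      ((Amat αhat - Amat α).mulVec ζ) i
        + ((Amat α - Matrix.vecMulVec G r).mulVec ζt) i - G i * ηt = 0)
    -- adaptation equation at equilibrium
    (heq6 : ∀ k : Fin s, -kα * Λ k * (ηt + ∑ j, r j * ζt j) = 0) :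
    ηt = 0 ∧ ζt = 0 ∧ αhat = α ∧
      dotProduct (Matrix.vecMul r (1 + Amat αhat)) ζ =
        dotProduct (Matrix.vecMul r (1 + Amat α)) φv := by

  -- (i) ηt = 0
  have hηt : ηt = 0 := by linarith
  -- abbreviation for the scalar S = rᵀ ζt
  obtain ⟨S, hS⟩ : ∃ S : ℝ, S = ∑ j, r j * ζt j := ⟨_, rfl⟩
  -- from the adaptation equation: Λ k * S = 0 for all k
  have hΛS : ∀ k, Λ k * S = 0 := by
    intro k
    have h := heq6 k
    rw [hηt, zero_add, mul_assoc, ← hS] at h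
    rcases mul_eq_zero.1 h with h1 | h1
    · exact absurd h1 (neg_ne_zero.2 hkα.ne')
    · exact h1
  -- a general reindexing lemma for sums over odd indices
  have hsumF : ∀ (F : Fin (2 * s + 1) → ℝ) (g : Fin s → ℝ),
      (∀ j : Fin (2 * s + 1), (j : ℕ) % 2 = 0 → F j = 0) →
      (∀ k : Fin s, F ⟨2 * (k : ℕ) + 1, by omega⟩ = g k) →
      (∑ j, F j) = ∑ k, g k := by
    intro F g h0 h1
    rw [← Finset.sum_filter_of_ne
        (p := fun j : Fin (2 * s + 1) => (j : ℕ) % 2 = 1)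
        (fun x _ hx => by by_contra hc; exact hx (h0 x (by omega)))]
    refine Finset.sum_nbij'
      (i := fun j : Fin (2 * s + 1) => (⟨min ((j : ℕ) / 2) (s - 1), by omega⟩ : Fin s))
      (j := fun k : Fin s => (⟨2 * (k : ℕ) + 1, by omega⟩ : Fin (2 * s + 1)))
      ?_ ?_ ?_ ?_ ?_
    · intro a _; exact Finset.mem_univ _
    · intro k _
      simp only [Finset.mem_filter, Finset.mem_univ, true_and]
      show (2 * (k : ℕ) + 1) % 2 = 1
      omega
    · intro a ha
      simp only [Finset.mem_filter, Finset.mem_univ, true_and] at ha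
      apply Fin.ext
      have h2 := a.isLt
      show 2 * (min ((a : ℕ) / 2) (s - 1)) + 1 = (a : ℕ)
      omega
    · intro k _
      apply Fin.ext
      have h2 := k.isLt
      show min ((2 * (k : ℕ) + 1) / 2) (s - 1) = (k : ℕ)
      omega
    · intro a ha
      simp only [Finset.mem_filter, Finset.mem_univ, true_and] at ha
      have h2 := a.isLt
      have hv : (⟨2 * (min ((a : ℕ) / 2) (s - 1)) + 1, by omega⟩ : Fin (2 * s + 1)) = a :=
        Fin.ext (show 2 * (min ((a : ℕ) / 2) (s - 1)) + 1 = (a : ℕ) by omega)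
      rw [← h1, hv]
  -- rows of the internal-model matrix
  have hrow_lt : ∀ (b : Fin s → ℝ) (v : Fin (2 * s + 1) → ℝ) (i : Fin (2 * s + 1))
      (hi : (i : ℕ) < 2 * s), (Amat b).mulVec v i = v ⟨(i : ℕ) + 1, by omega⟩ := by
    intro b v i hi
    have key : ∀ j : Fin (2 * s + 1), Amat b i j * v j =
        if j = (⟨(i : ℕ) + 1, by omega⟩ : Fin (2 * s + 1)) then v j else 0 := by
      intro j
      rw [hAmat, if_pos hi]
      by_cases hj : j = (⟨(i : ℕ) + 1, by omega⟩ : Fin (2 * s + 1))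
      · rw [if_pos (by rw [hj]), if_pos hj, one_mul]
      · rw [if_neg (fun h => hj (Fin.ext h)), if_neg hj, zero_mul]
    calc (Amat b).mulVec v i = ∑ j, Amat b i j * v j := by
          simp [Matrix.mulVec, dotProduct]
      _ = ∑ j, if j = (⟨(i : ℕ) + 1, by omega⟩ : Fin (2 * s + 1)) then v j else 0 :=
          Finset.sum_congr rfl fun j _ => key j
      _ = v ⟨(i : ℕ) + 1, by omega⟩ := by simp
  have hrow_last : ∀ (b : Fin s → ℝ) (v : Fin (2 * s + 1) → ℝ),
      (Amat b).mulVec v ⟨2 * s, by omega⟩ =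
        ∑ k : Fin s, b k * v ⟨2 * (k : ℕ) + 1, by omega⟩ := by
    intro b v
    calc (Amat b).mulVec v ⟨2 * s, by omega⟩
        = ∑ j, Amat b ⟨2 * s, by omega⟩ j * v j := by
          simp [Matrix.mulVec, dotProduct]
      _ = ∑ k : Fin s, b k * v ⟨2 * (k : ℕ) + 1, by omega⟩ := by
          apply hsumF
          · intro j hj
            rw [hAmat, if_neg (show ¬(2 * s < 2 * s) by omega), dif_neg (by omega), zero_mul]
          · intro k
            rw [hAmat, if_neg (show ¬(2 * s < 2 * s) by omega),
              dif_pos (show (2 * (k : ℕ) + 1) % 2 = 1 by omega)]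
            congr 1
            apply congrArg
            apply Fin.ext
            show (2 * (k : ℕ) + 1) / 2 = (k : ℕ)
            omega
  -- the rank-one term
  have hGrow : ∀ i : Fin (2 * s + 1),
      (Matrix.vecMulVec G r).mulVec ζt i = G i * S := by
    intro i
    rw [hS]
    simp [Matrix.mulVec, dotProduct, Matrix.vecMulVec_apply, Finset.mul_sum, mul_assoc]
  -- rewritten equilibrium equation (with ηt = 0)
  have heq5' : ∀ i : Fin (2 * s + 1),
      (Amat αhat).mulVec ζ i - (Amat α).mulVec ζ i
        + ((Amat α).mulVec ζt i - G i * S) = 0 := by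
    intro i
    have h := heq5 i
    rw [Matrix.sub_mulVec, Matrix.sub_mulVec, hηt, mul_zero, sub_zero] at h
    rw [Pi.sub_apply, Pi.sub_apply, hGrow] at h
    linarith
  -- middle rows
  have hmid : ∀ (i : Fin (2 * s + 1)) (hi : (i : ℕ) < 2 * s),
      ζt ⟨(i : ℕ) + 1, by omega⟩ = G i * S := by
    intro i hi
    have h := heq5' i
    rw [hrow_lt αhat ζ i hi, hrow_lt α ζ i hi, hrow_lt α ζt i hi] at h
    linarith
  -- components 1, …, 2s-1 of ζt vanish
  have hodd0 : ∀ j : Fin (2 * s + 1), 1 ≤ (j : ℕ) → (j : ℕ) ≤ 2 * s - 1 → ζt j = 0 := by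
    intro j h1 h2
    have hjlt := j.isLt
    have h := hmid ⟨(j : ℕ) - 1, by omega⟩ (show (j : ℕ) - 1 < 2 * s by omega)
    have hj : (⟨((⟨(j : ℕ) - 1, by omega⟩ : Fin (2 * s + 1)) : ℕ) + 1,
        by show (j : ℕ) - 1 + 1 < 2 * s + 1; omega⟩ :
        Fin (2 * s + 1)) = j := Fin.ext (show (j : ℕ) - 1 + 1 = (j : ℕ) by omega)
    rw [hj, hG] at h
    rw [h, if_neg (show ¬((j : ℕ) - 1 = 2 * s - 1) by omega),
      if_neg (show ¬((j : ℕ) - 1 = 2 * s) by omega), zero_mul]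
  -- the last row gives the regressor equation
  have hζtodd : ∀ k : Fin s, ζt ⟨2 * (k : ℕ) + 1, by omega⟩ = 0 := by
    intro k
    have hk := k.isLt
    exact hodd0 _ (show 1 ≤ 2 * (k : ℕ) + 1 by omega)
      (show 2 * (k : ℕ) + 1 ≤ 2 * s - 1 by omega)
  have hlasteq : (∑ k, Λ k * (αhat k - α k)) - γ * S = 0 := by
    have h := heq5' ⟨2 * s, by omega⟩
    rw [hrow_last αhat ζ, hrow_last α ζ, hrow_last α ζt] at h
    have e2 : (∑ k : Fin s, α k * ζt ⟨2 * (k : ℕ) + 1, by omega⟩) = 0 :=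
      Finset.sum_eq_zero fun k _ => by rw [hζtodd k, mul_zero]
    have e3 : G ⟨2 * s, by omega⟩ = γ := by
      rw [hG, if_neg (show ¬(2 * s = 2 * s - 1) by omega), if_pos rfl]
    have e1 : (∑ k, Λ k * (αhat k - α k)) =
        (∑ k : Fin s, αhat k * ζ ⟨2 * (k : ℕ) + 1, by omega⟩)
          - ∑ k : Fin s, α k * ζ ⟨2 * (k : ℕ) + 1, by omega⟩ := by
      rw [← Finset.sum_sub_distrib]
      refine Finset.sum_congr rfl fun k _ => ?_
      rw [hΛ]
      ring
    rw [e2, e3] at h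
    rw [e1]
    linarith
  -- apply the PE proviso
  obtain ⟨hb0, hS0⟩ := hPE (fun k => αhat k - α k) S hlasteq hΛS
  have hαeq : αhat = α := by
    funext k
    have := congrFun hb0 k
    simpa [sub_eq_zero] using this
  -- component 2s of ζt vanishes
  have hζtop : ζt ⟨2 * s, by omega⟩ = 0 := by
    have h := hmid ⟨2 * s - 1, by omega⟩ (show 2 * s - 1 < 2 * s by omega)
    have hj : (⟨((⟨2 * s - 1, by omega⟩ : Fin (2 * s + 1)) : ℕ) + 1,
        by show 2 * s - 1 + 1 < 2 * s + 1; omega⟩ :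
        Fin (2 * s + 1)) = ⟨2 * s, by omega⟩ := Fin.ext (show 2 * s - 1 + 1 = 2 * s by omega)
    rw [hj] at h
    rw [h, hS0, mul_zero]
  -- r₀ ≠ 0 since p is Hurwitz
  have hr0 : r ⟨0, by omega⟩ ≠ 0 := by
    intro h0
    have hpne : p ≠ 0 := by
      intro hp0
      have hco : p.coeff (2 * s) = 1 := by
        rw [hp, Polynomial.coeff_add, Polynomial.coeff_X_pow, if_pos rfl,
          Polynomial.finset_sum_coeff]
        have hterm : ∀ j : Fin (2 * s),
            (Polynomial.C ((r j.castSucc : ℂ)) * Polynomial.X ^ (j : ℕ)).coeff (2 * s) = 0 := by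
          intro j
          have := j.isLt
          rw [Polynomial.coeff_C_mul, Polynomial.coeff_X_pow, if_neg (by omega), mul_zero]
        rw [Finset.sum_congr rfl fun j _ => hterm j, Finset.sum_const_zero, add_zero]
      rw [hp0, Polynomial.coeff_zero] at hco
      exact one_ne_zero hco.symm
    have heval : Polynomial.eval 0 p = 0 := by
      rw [hp, Polynomial.eval_add, Polynomial.eval_pow, Polynomial.eval_X,
        zero_pow (by omega), Polynomial.eval_finset_sum]
      have hterm : ∀ j : Fin (2 * s),
          Polynomial.eval 0 (Polynomial.C ((r j.castSucc : ℂ)) * Polynomial.X ^ (j : ℕ)) =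
            if j = (⟨0, by omega⟩ : Fin (2 * s)) then (r j.castSucc : ℂ) else 0 := by
        intro j
        rw [Polynomial.eval_mul, Polynomial.eval_C, Polynomial.eval_pow, Polynomial.eval_X]
        by_cases hj : j = (⟨0, by omega⟩ : Fin (2 * s))
        · rw [if_pos hj, hj]
          norm_num
        · rw [if_neg hj, zero_pow (fun h => hj (Fin.ext h)), mul_zero]
      rw [Finset.sum_congr rfl fun j _ => hterm j, Finset.sum_ite_eq']
      have hc : (⟨0, by omega⟩ : Fin (2 * s)).castSucc = (⟨0, by omega⟩ : Fin (2 * s + 1)) :=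
        Fin.ext rfl
      rw [if_pos (Finset.mem_univ _), hc, h0, Complex.ofReal_zero, add_zero]
    have hroot : (0 : ℂ) ∈ p.roots := by
      rw [Polynomial.mem_roots hpne]
      exact heval
    have := hHurwitz 0 hroot
    simp at this
  -- component 0 of ζt vanishes
  have hζ0 : ζt ⟨0, by omega⟩ = 0 := by
    have hsum0 : (∑ j, r j * ζt j) = r ⟨0, by omega⟩ * ζt ⟨0, by omega⟩ := by
      rw [Finset.sum_eq_single (⟨0, by omega⟩ : Fin (2 * s + 1))]
      · intro j _ hj
        have hjlt := j.isLt
        by_cases hjt : (j : ℕ) = 2 * s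
        · have : j = (⟨2 * s, by omega⟩ : Fin (2 * s + 1)) := Fin.ext hjt
          rw [this, hζtop, mul_zero]
        · rw [hodd0 j (by by_contra hc; exact hj (Fin.ext (show (j : ℕ) = 0 by omega)))
            (by omega), mul_zero]
      · intro h
        exact absurd (Finset.mem_univ _) h
    rw [← hS, hS0] at hsum0
    rcases mul_eq_zero.1 hsum0.symm with h | h
    · exact absurd h hr0
    · exact h
  -- (ii) ζt = 0
  have hζtall : ζt = 0 := by
    funext j
    have hjlt := j.isLt
    show ζt j = 0
    by_cases hj0 : (j : ℕ) = 0
    · rw [show j = (⟨0, by omega⟩ : Fin (2 * s + 1)) from Fin.ext hj0]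
      exact hζ0
    · by_cases hjt : (j : ℕ) = 2 * s
      · rw [show j = (⟨2 * s, by omega⟩ : Fin (2 * s + 1)) from Fin.ext hjt]
        exact hζtop
      · exact hodd0 j (by omega) (by omega)
  have hζφ : ζ = φv := by
    rw [← sub_eq_zero, ← hζt]
    exact hζtall
  exact ⟨hηt, hζtall, hαeq, by rw [hαeq, hζφ]⟩
end
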